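/- Convergence to the α-determinantal process with α = −1/(2B−1) (odd type, B blocks, the first block starting at the ground level): let n ≥ 1, B ≥ 1, and let ω_1, …, ω_{B−1} : ℕ → ℝ be sequences with ω_j(t) → ∞ for every j and |ω_j(t) − ω_k(t)| → ∞ for all j ≠ k, as t → ∞. Define k_t(u) = sinc(πu/(2B−1)) · (2/(2B−1)) ( 1/2 + ∑_{j=1}^{B−1} cos(ω_j(t) u) ). Then for every bounded measurable f : ℝⁿ → ℝ with compact support, lim_{t → ∞} ∫_{ℝⁿ} det_{1 ≤ i,j ≤ n}[ k_t(x_i − x_j) ] f(x) dx = ∫_{ℝⁿ} det_{−1/(2B−1), 1 ≤ i,j ≤ n}[ sinc(π(x_i − x_j)/(2B−1)) ] f(x) dx. -/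

import Mathlib

open Filter MeasureTheory

/-- The setoid on `Fin n` whose classes are the cycles (orbits) of a permutation `σ`,
counting fixed points as singleton orbits. -/
def sameCycleSetoid {n : ℕ} (σ : Equiv.Perm (Fin n)) : Setoid (Fin n) :=
  ⟨σ.SameCycle, ⟨fun x => Equiv.Perm.SameCycle.refl σ x,
    fun h => h.symm, fun h h' => h.trans h'⟩⟩

/-- `cycleCount σ` is the number of cycles `m(σ)` of the permutation `σ`. -/
noncomputable def cycleCount {n : ℕ} (σ : Equiv.Perm (Fin n)) : ℕ :=
  Nat.card (Quotient (sameCycleSetoid σ))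

/-- The `α`-determinant of an `n × n` real matrix:
`det_α A = ∑_{σ ∈ S_n} α^(n - m(σ)) ∏_i A_{σ(i), i}`. -/
noncomputable def adet {n : ℕ} (α : ℝ) (A : Matrix (Fin n) (Fin n) ℝ) : ℝ :=
  ∑ σ : Equiv.Perm (Fin n), α ^ (n - cycleCount σ) * ∏ i, A (σ i) i

/-- `sinc t = sin t / t` for `t ≠ 0`, and `sinc 0 = 1`. -/
noncomputable def sinc (t : ℝ) : ℝ := if t = 0 then 1 else Real.sin t / t

/-! ### Combinatorial auxiliary lemmas -/

lemma sameCycle_fixed {n : ℕ} {σ : Equiv.Perm (Fin n)} {x y : Fin n} (hx : σ x = x)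
    (h : σ.SameCycle x y) : x = y := by
  obtain ⟨k, hk⟩ := h
  rw [← hk, Equiv.Perm.zpow_apply_eq_self_of_apply_eq_self hx k]

def cycleClassify {n : ℕ} (σ : Equiv.Perm (Fin n)) (x : Fin n) :
    (↥σ.cycleFactorsFinset ⊕ {x : Fin n // σ x = x}) :=
  if h : σ x = x then Sum.inr ⟨x, h⟩ else Sum.inl ⟨σ.cycleOf x,
    Equiv.Perm.cycleOf_mem_cycleFactorsFinset_iff.mpr (Equiv.Perm.mem_support.mpr h)⟩

lemma cycleClassify_sound {n : ℕ} (σ : Equiv.Perm (Fin n)) : ∀ x y : Fin n,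
    σ.SameCycle x y → cycleClassify σ x = cycleClassify σ y := by
  intro x y hxy
  by_cases hx : σ x = x
  · obtain rfl := sameCycle_fixed hx hxy
    rfl
  · have hy : ¬ σ y = y := fun hy => hx (by obtain rfl := sameCycle_fixed hy hxy.symm; exact hy)
    simp only [cycleClassify, hx, hy, dif_neg, not_false_iff]
    exact congrArg _ (Subtype.ext hxy.cycleOf_eq)

lemma cycleClassify_inj {n : ℕ} (σ : Equiv.Perm (Fin n)) (x y : Fin n)
    (h : cycleClassify σ x = cycleClassify σ y) : σ.SameCycle x y := by
  by_cases hx : σ x = x <;> by_cases hy : σ y = y <;>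
    simp only [cycleClassify, hx, hy, dif_pos, dif_neg, not_false_iff] at h
  · cases h; exact Equiv.Perm.SameCycle.refl σ x
  · exact absurd h (by simp)
  · exact absurd h (by simp)
  · have hcy : σ.cycleOf x = σ.cycleOf y := by simpa using h
    have h1 : (σ.cycleOf x) y ≠ y := by
      rw [hcy, Equiv.Perm.cycleOf_apply_self]; exact hy
    by_contra hne
    rw [Equiv.Perm.cycleOf_apply, if_neg hne] at h1
    exact h1 rfl

noncomputable def cycleQuotEquiv {n : ℕ} (σ : Equiv.Perm (Fin n)) :
    Quotient (sameCycleSetoid σ) ≃ (↥σ.cycleFactorsFinset ⊕ {x : Fin n // σ x = x}) := by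
  refine Equiv.ofBijective (Quotient.lift (cycleClassify σ) (cycleClassify_sound σ)) ⟨?_, ?_⟩
  · rintro ⟨x⟩ ⟨y⟩ h
    exact Quotient.sound (cycleClassify_inj σ x y h)
  · rintro (⟨c, hc⟩ | ⟨x, hx⟩)
    · obtain ⟨x, hx⟩ := (Equiv.Perm.mem_cycleFactorsFinset_iff.mp hc).1.nonempty_support
      have hxσ : σ x ≠ x := by
        have := (Equiv.Perm.mem_cycleFactorsFinset_iff.mp hc).2 x hx
        rw [← this]; exact Equiv.Perm.mem_support.mp hx
      refine ⟨⟦x⟧, ?_⟩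
      show cycleClassify σ x = _
      simp only [cycleClassify, hxσ, dif_neg, not_false_iff]
      exact congrArg _ (Subtype.ext (Equiv.Perm.cycle_is_cycleOf hx hc).symm)
    · exact ⟨⟦x⟧, show cycleClassify σ x = _ by simp [cycleClassify, hx]⟩

lemma cycleCount_eq {n : ℕ} (σ : Equiv.Perm (Fin n)) :
    cycleCount σ = Multiset.card σ.cycleType + (n - σ.support.card) := by
  classical
  rw [cycleCount, Nat.card_congr (cycleQuotEquiv σ), Nat.card_sum]
  congr 1
  · rw [Nat.card_eq_finsetCard, Equiv.Perm.cycleType_def, Multiset.card_map]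
    rfl
  · rw [Nat.card_eq_fintype_card, Fintype.card_subtype]
    have h2 := Finset.card_filter_add_card_filter_not
      (s := (Finset.univ : Finset (Fin n))) (p := fun x => σ x = x)
    have hsup : σ.support = Finset.univ.filter (fun x => ¬ σ x = x) := rfl
    have h3 : (Finset.univ : Finset (Fin n)).card = n := by simp
    rw [hsup]
    omega

lemma card_cycleType_le {n : ℕ} (σ : Equiv.Perm (Fin n)) :
    Multiset.card σ.cycleType ≤ σ.support.card := by
  rw [← Equiv.Perm.sum_cycleType]
  calc Multiset.card σ.cycleType = Multiset.card σ.cycleType • 1 := by simp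
    _ ≤ σ.cycleType.sum := Multiset.card_nsmul_le_sum fun x hx =>
        (by have := Equiv.Perm.two_le_of_mem_cycleType hx; omega)

lemma support_card_le {n : ℕ} (σ : Equiv.Perm (Fin n)) : σ.support.card ≤ n := by
  simpa using Finset.card_le_card (Finset.subset_univ σ.support)

lemma cycleCount_le {n : ℕ} (σ : Equiv.Perm (Fin n)) : cycleCount σ ≤ n := by
  have h1 := card_cycleType_le σ
  have h2 := support_card_le σ
  rw [cycleCount_eq]; omega

lemma sign_eq_pow {n : ℕ} (σ : Equiv.Perm (Fin n)) :
    ((Equiv.Perm.sign σ : ℤ) : ℂ) = (-1 : ℂ) ^ (n - cycleCount σ) := by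
  have h1 := card_cycleType_le σ
  have h2 := support_card_le σ
  have hm : n - cycleCount σ = σ.support.card - Multiset.card σ.cycleType := by
    rw [cycleCount_eq]; omega
  rw [Equiv.Perm.sign_of_cycleType, hm, Equiv.Perm.sum_cycleType]
  have : σ.support.card + Multiset.card σ.cycleType
      = (σ.support.card - Multiset.card σ.cycleType) + 2 * Multiset.card σ.cycleType := by omega
  rw [this]
  push_cast
  rw [pow_add, pow_mul]
  norm_num

lemma eps_zpow {n : ℕ} {σ : Equiv.Perm (Fin n)} {E : Type*} {ε : Fin n → E}
    (hε : ∀ i, ε (σ i) = ε i) : ∀ (k : ℤ) (x : Fin n), ε ((σ ^ k) x) = ε x := by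
  intro k
  induction k using Int.induction_on with
  | zero => simp
  | succ k ih =>
      intro x
      have : (σ ^ ((k : ℤ) + 1)) x = (σ ^ (k : ℤ)) (σ x) := by
        rw [zpow_add_one]; rfl
      rw [this, ih, hε]
  | pred k ih =>
      intro x
      have : (σ ^ (-(k : ℤ) - 1)) x = (σ ^ (-(k : ℤ))) (σ⁻¹ x) := by
        rw [zpow_sub_one]; rfl
      rw [this, ih]
      conv_rhs => rw [show x = σ (σ⁻¹ x) by simp]
      rw [hε]

/-- Functions constant along cycles are in bijection with functions on the cycle quotient. -/
def epsEquiv {n : ℕ} (σ : Equiv.Perm (Fin n)) (E : Type*) :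
    {ε : Fin n → E // ∀ i, ε (σ i) = ε i} ≃ (Quotient (sameCycleSetoid σ) → E) where
  toFun ε := Quotient.lift ε.1 (by
    rintro x y ⟨k, hk⟩
    rw [← hk, eps_zpow ε.2])
  invFun g := ⟨fun x => g ⟦x⟧, fun i => congrArg g (Quotient.sound ⟨-1, by simp⟩)⟩
  left_inv ε := rfl
  right_inv g := by
    funext q
    induction q using Quotient.inductionOn with
    | h x => rfl

lemma card_eps {n : ℕ} (σ : Equiv.Perm (Fin n)) (E : Type*) [Fintype E] [DecidableEq E] :
    (Finset.univ.filter fun ε : Fin n → E => ∀ i, ε (σ i) = ε i).card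
      = Fintype.card E ^ cycleCount σ := by
  rw [← Fintype.card_subtype, ← Nat.card_eq_fintype_card, Nat.card_congr (epsEquiv σ E),
    Nat.card_fun, Nat.card_eq_fintype_card, cycleCount]

/-! ### Analytic auxiliary lemmas -/

lemma sinc_measurable : Measurable sinc := by
  unfold sinc
  exact Measurable.ite (measurableSet_eq_fun measurable_id measurable_const)
    measurable_const (Real.measurable_sin.div measurable_id)

lemma abs_sinc_le_one (t : ℝ) : |sinc t| ≤ 1 := by
  unfold sinc
  split_ifs with h
  · simp
  · rw [abs_div]
    rw [div_le_one (abs_pos.mpr h)]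
    exact Real.abs_sin_le_abs

lemma integrable_term {n : ℕ} (g : (Fin n → ℝ) → ℂ) (f : (Fin n → ℝ) → ℝ)
    (hg : Measurable g) (D : ℝ) (hD : ∀ x, ‖g x‖ ≤ D)
    (hf : Measurable f) (C : ℝ) (hC : ∀ x, |f x| ≤ C) (hsupp : HasCompactSupport f) :
    Integrable (fun x => g x * (f x : ℂ)) := by
  refine Integrable.mono' (g := fun x => (tsupport f).indicator (fun _ => D * C) x) ?_ ?_ ?_
  · rw [integrable_indicator_iff (isClosed_tsupport f).measurableSet]
    exact integrableOn_const hsupp.measure_lt_top.ne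
  · exact (hg.mul (Complex.measurable_ofReal.comp hf)).aestronglyMeasurable
  · refine Filter.Eventually.of_forall fun x => ?_
    show _ ≤ (tsupport f).indicator (fun _ => D * C) x
    by_cases hx : x ∈ tsupport f
    · rw [Set.indicator_of_mem hx]
      rw [norm_mul, Complex.norm_real, Real.norm_eq_abs]
      exact mul_le_mul (hD x) (hC x) (abs_nonneg _) (le_trans (norm_nonneg _) (hD x))
    · rw [Set.indicator_of_notMem hx, image_eq_zero_of_notMem_tsupport hx]
      simp

lemma rl_aux {n : ℕ} (g : (Fin n → ℝ) → ℂ) (c : ℕ → Fin n → ℝ) (j0 : Fin n)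
    (hc : Tendsto (fun t => |c t j0|) atTop atTop) :
    Tendsto (fun t => ∫ x : Fin n → ℝ,
      Complex.exp (Complex.I * (∑ j, c t j * x j)) * g x) atTop (nhds 0) := by
  classical
  have hπ : (0:ℝ) < 2 * Real.pi := by positivity
  set L : ℕ → ((Fin n → ℝ) →L[ℝ] ℝ) :=
    fun t => ∑ j, (-(c t j) / (2 * Real.pi)) • ContinuousLinearMap.proj j with hL
  have hLapp : ∀ t x, L t x = -(∑ j, c t j * x j) / (2 * Real.pi) := by
    intro t x
    simp only [hL, ContinuousLinearMap.sum_apply, ContinuousLinearMap.smul_apply,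
      ContinuousLinearMap.proj_apply, smul_eq_mul]
    calc ∑ j, -c t j / (2 * Real.pi) * x j
        = ∑ j, (-(c t j * x j)) / (2 * Real.pi) :=
          Finset.sum_congr rfl fun j _ => by ring
      _ = (∑ j, -(c t j * x j)) / (2 * Real.pi) := by rw [Finset.sum_div]
      _ = -(∑ j, c t j * x j) / (2 * Real.pi) := by rw [Finset.sum_neg_distrib]
  have key : ∀ t, (∫ x : Fin n → ℝ, Complex.exp (Complex.I * (∑ j, c t j * x j)) * g x)
      = ∫ x : Fin n → ℝ, Real.fourierChar (-(L t) x) • g x := by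
    intro t
    congr 1
    funext x
    rw [Circle.smul_def, Real.fourierChar_apply]
    have hreal : 2 * Real.pi * -((L t) x) = ∑ j, c t j * x j := by
      rw [hLapp]
      field_simp
    congr 1
    rw [hreal, mul_comm]
  simp only [key]
  have hnorm : Tendsto (fun t => ‖L t‖) atTop atTop := by
    have hb : ∀ t, |c t j0| / (2 * Real.pi) ≤ ‖L t‖ := by
      intro t
      have h1 := (L t).le_opNorm (Pi.single j0 (1:ℝ))
      have h2 : ‖(Pi.single j0 (1:ℝ) : Fin n → ℝ)‖ = 1 := by
        rw [Pi.norm_single]; simp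
      rw [h2, mul_one] at h1
      refine le_trans (le_of_eq ?_) h1
      rw [hLapp]
      have : (∑ j, c t j * (Pi.single j0 (1:ℝ) : Fin n → ℝ) j) = c t j0 := by
        rw [Finset.sum_eq_single j0]
        · simp
        · intro b _ hb; simp [Pi.single_apply, hb]
        · simp
      rw [this, Real.norm_eq_abs, abs_div, abs_neg, abs_of_pos hπ]
    refine tendsto_atTop_mono hb ?_
    exact hc.atTop_div_const hπ
  have hco : Tendsto L atTop (cocompact ((Fin n → ℝ) →L[ℝ] ℝ)) := by
    rw [← Metric.cobounded_eq_cocompact]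
    exact tendsto_norm_atTop_iff_cobounded.mp hnorm
  exact (tendsto_integral_exp_smul_cocompact g volume).comp hco

/-! ### Frequencies -/

/-- The signed frequencies `0, ±ω_1, …, ±ω_{m}`. -/
def phiFun {m : ℕ} (ω : Fin m → ℕ → ℝ) : Option (Fin m × Bool) → ℕ → ℝ
  | none => fun _ => 0
  | some (l, b) => fun t => (if b then 1 else -1) * ω l t

lemma phi_sep {m : ℕ} (ω : Fin m → ℕ → ℝ) (hω : ∀ j, Tendsto (ω j) atTop atTop)
    (hsep : ∀ j k, j ≠ k → Tendsto (fun t => |ω j t - ω k t|) atTop atTop) :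
    ∀ e e' : Option (Fin m × Bool), e ≠ e' →
      Tendsto (fun t => |phiFun ω e t - phiFun ω e' t|) atTop atTop := by
  have habs : ∀ l, Tendsto (fun t => |ω l t|) atTop atTop :=
    fun l => tendsto_abs_atTop_atTop.comp (hω l)
  have hadd : ∀ l l', Tendsto (fun t => |ω l t + ω l' t|) atTop atTop :=
    fun l l' => tendsto_abs_atTop_atTop.comp ((hω l).atTop_add_atTop (hω l'))
  rintro (_ | ⟨l, b⟩) (_ | ⟨l', b'⟩) hne
  · exact absurd rfl hne
  · refine (habs l').congr' (Filter.Eventually.of_forall fun t => ?_)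
    cases b' <;> simp [phiFun, abs_neg]
  · refine (habs l).congr' (Filter.Eventually.of_forall fun t => ?_)
    cases b <;> simp [phiFun, abs_neg]
  · by_cases hb : b = b'
    · subst hb
      have hll : l ≠ l' := by
        intro h; exact hne (by rw [h])
      refine (hsep l l' hll).congr' (Filter.Eventually.of_forall fun t => ?_)
      cases b <;> simp [phiFun] <;> rw [← abs_neg] <;> congr 1 <;> ring
    · have h1 : ∀ (l : Fin m) t, phiFun ω (some (l, true)) t = ω l t := by
        intro l t; simp [phiFun]
      have h2 : ∀ (l : Fin m) t, phiFun ω (some (l, false)) t = -ω l t := by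
        intro l t; simp [phiFun]
      refine (hadd l l').congr' (Filter.Eventually.of_forall fun t => ?_)
      cases b <;> cases b' <;> simp at hb
      · dsimp only; rw [h2, h1, ← abs_neg]; congr 1; ring
      · dsimp only; rw [h1, h2]; congr 1; ring

lemma phase_eq {n : ℕ} (σ : Equiv.Perm (Fin n)) (a : Fin n → ℝ) (x : Fin n → ℝ) :
    ∑ i, a i * (x (σ i) - x i) = ∑ j, (a (σ⁻¹ j) - a j) * x j := by
  have h1 : ∑ i, a i * x (σ i) = ∑ j, a (σ⁻¹ j) * x j := by
    refine Fintype.sum_equiv σ _ _ fun i => ?_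
    simp
  calc ∑ i, a i * (x (σ i) - x i)
      = (∑ i, a i * x (σ i)) - ∑ i, a i * x i := by
        rw [← Finset.sum_sub_distrib]
        exact Finset.sum_congr rfl fun i _ => by ring
    _ = (∑ j, a (σ⁻¹ j) * x j) - ∑ j, a j * x j := by rw [h1]
    _ = ∑ j, (a (σ⁻¹ j) - a j) * x j := by
        rw [← Finset.sum_sub_distrib]
        exact Finset.sum_congr rfl fun j _ => by ring

lemma entryExpand {m : ℕ} (Mr : ℝ) (hMr : Mr ≠ 0) (ω : Fin m → ℕ → ℝ) (t : ℕ) (s u : ℝ) :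
    ((s * ((2 / Mr) * (1 / 2 + ∑ l, Real.cos (ω l t * u))) : ℝ) : ℂ)
      = ∑ e : Option (Fin m × Bool),
          Complex.exp (Complex.I * ((phiFun ω e t * u : ℝ) : ℂ)) * ((s : ℂ) * (1 / (Mr : ℂ))) := by
  have hsum : ∑ e : Option (Fin m × Bool), Complex.exp (Complex.I * ((phiFun ω e t * u : ℝ) : ℂ))
      = 1 + ∑ l, 2 * Complex.cos (((ω l t * u : ℝ)) : ℂ) := by
    rw [Fintype.sum_option, Fintype.sum_prod_type]
    congr 1
    · simp [phiFun]
    · refine Finset.sum_congr rfl fun l _ => ?_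
      rw [Fintype.sum_bool]
      have h1 : phiFun ω (some (l, true)) t = ω l t := by simp [phiFun]
      have h2 : phiFun ω (some (l, false)) t = -ω l t := by simp [phiFun]
      rw [h1, h2,
          show Complex.I * ((ω l t * u : ℝ) : ℂ) = ((ω l t * u : ℝ) : ℂ) * Complex.I by ring,
          show Complex.I * ((-ω l t * u : ℝ) : ℂ) = -((ω l t * u : ℝ) : ℂ) * Complex.I by
            push_cast; ring,
          ← Complex.two_cos]
  rw [← Finset.sum_mul, hsum]
  push_cast
  rw [← Finset.mul_sum]
  have hC : (Mr : ℂ) ≠ 0 := Complex.ofReal_ne_zero.mpr hMr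
  field_simp
  simp only [mul_comm (u : ℂ)]

/-! ### The sinc product -/

noncomputable def sincProd (Mr : ℝ) {n : ℕ} (σ : Equiv.Perm (Fin n)) (x : Fin n → ℝ) : ℝ :=
  ∏ i, sinc (Real.pi * (x (σ i) - x i) / Mr)

lemma sincProd_measurable (Mr : ℝ) {n : ℕ} (σ : Equiv.Perm (Fin n)) :
    Measurable (sincProd Mr σ) := by
  refine Finset.measurable_prod _ fun i _ => ?_
  exact sinc_measurable.comp (by fun_prop)

lemma abs_sincProd_le_one (Mr : ℝ) {n : ℕ} (σ : Equiv.Perm (Fin n)) (x : Fin n → ℝ) :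
    |sincProd Mr σ x| ≤ 1 := by
  rw [sincProd, Finset.abs_prod]
  exact Finset.prod_le_one (fun i _ => abs_nonneg _) (fun i _ => abs_sinc_le_one _)

/-- Convergence to the `α`-determinantal process with `α = −1/(2B−1)` (odd type, `B` blocks,
the first starting at the ground level): with
`k_t(u) = sinc(πu/(2B−1)) (2/(2B−1)) (1/2 + ∑_j cos(ω_j(t)u))` and frequencies going to
infinity and separating, the integrals of `det[k_t(x_i − x_j)]` against any bounded,
measurable, compactly supported `f` converge to the integrals of
`det_{−1/(2B−1)}[sinc(π(x_i − x_j)/(2B−1))]`. -/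
theorem convergence_alpha_determinantal_odd (n B : ℕ) (hn : 1 ≤ n) (hB : 1 ≤ B)
    (ω : Fin (B - 1) → ℕ → ℝ) (hω : ∀ j, Tendsto (ω j) atTop atTop)
    (hsep : ∀ j k, j ≠ k → Tendsto (fun t => |ω j t - ω k t|) atTop atTop)
    (f : (Fin n → ℝ) → ℝ) (hmeas : Measurable f) (hbd : ∃ C : ℝ, ∀ x, |f x| ≤ C)
    (hsupp : HasCompactSupport f) :
    Tendsto (fun t : ℕ =>
        ∫ x : Fin n → ℝ,
          (Matrix.of fun i j : Fin n =>
            sinc (Real.pi * (x i - x j) / (2 * (B : ℝ) - 1)) *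
              ((2 / (2 * (B : ℝ) - 1)) *
                (1 / 2 + ∑ l : Fin (B - 1), Real.cos (ω l t * (x i - x j))))).det * f x)
      atTop
      (nhds (∫ x : Fin n → ℝ,
        adet (-(1 / (2 * (B : ℝ) - 1)))
          (Matrix.of fun i j : Fin n => sinc (Real.pi * (x i - x j) / (2 * (B : ℝ) - 1)))
          * f x)) := by
  classical
  obtain ⟨C, hC⟩ := hbd
  set Mr : ℝ := 2 * (B : ℝ) - 1 with hMrdef
  have hB1 : (1:ℝ) ≤ (B:ℝ) := by exact_mod_cast hB
  have hMr1 : (1:ℝ) ≤ Mr := by rw [hMrdef]; linarith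
  have hMr0 : Mr ≠ 0 := by linarith
  have hMc0 : (Mr : ℂ) ≠ 0 := Complex.ofReal_ne_zero.mpr hMr0
  -- the integrals of the sinc products against f
  set J : Equiv.Perm (Fin n) → ℂ :=
    fun σ => ∫ x : Fin n → ℝ, ((sincProd Mr σ x : ℂ)) * ((f x : ℝ) : ℂ) with hJdef
  have hJint : ∀ σ : Equiv.Perm (Fin n),
      Integrable (fun x : Fin n → ℝ => ((sincProd Mr σ x : ℂ)) * ((f x : ℝ) : ℂ)) := by
    intro σ
    refine integrable_term _ f (Complex.measurable_ofReal.comp (sincProd_measurable Mr σ)) 1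
      (fun x => ?_) hmeas C hC hsupp
    rw [Complex.norm_real, Real.norm_eq_abs]
    exact abs_sincProd_le_one Mr σ x
  have hint2 : ∀ (σ : Equiv.Perm (Fin n)) (Θ : (Fin n → ℝ) → ℝ), Measurable Θ →
      Integrable (fun x : Fin n → ℝ =>
        Complex.exp (Complex.I * ((Θ x : ℝ) : ℂ)) * (((sincProd Mr σ x : ℂ)) * ((f x : ℝ) : ℂ))) := by
    intro σ Θ hΘ
    have h := integrable_term
      (fun x : Fin n → ℝ => Complex.exp (Complex.I * ((Θ x : ℝ) : ℂ)) * ((sincProd Mr σ x : ℂ)))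
      f
      ((Complex.measurable_exp.comp
        ((Complex.measurable_ofReal.comp hΘ).const_mul Complex.I)).mul
        (Complex.measurable_ofReal.comp (sincProd_measurable Mr σ)))
      1
      (fun x => by
        rw [norm_mul, mul_comm Complex.I, Complex.norm_exp_ofReal_mul_I, one_mul,
          Complex.norm_real, Real.norm_eq_abs]
        exact abs_sincProd_le_one Mr σ x)
      hmeas C hC hsupp
    simpa [mul_assoc] using h
  -- measurability of the phases
  have hΘmeas : ∀ (σ : Equiv.Perm (Fin n)) (ε : Fin n → Option (Fin (B - 1) × Bool)) (t : ℕ),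
      Measurable (fun x : Fin n → ℝ => ∑ i, phiFun ω (ε i) t * (x (σ i) - x i)) := by
    intro σ ε t
    refine Finset.measurable_sum _ fun i _ => ?_
    exact ((measurable_pi_apply (σ i)).sub (measurable_pi_apply i)).const_mul _
  -- Step 1: expansion of the left-hand side
  have expand : ∀ t : ℕ,
      ((∫ x : Fin n → ℝ,
          (Matrix.of fun i j : Fin n =>
            sinc (Real.pi * (x i - x j) / Mr) *
              ((2 / Mr) *
                (1 / 2 + ∑ l : Fin (B - 1), Real.cos (ω l t * (x i - x j))))).det * f x : ℝ) : ℂ)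
      = ∑ σ : Equiv.Perm (Fin n), ∑ ε : Fin n → Option (Fin (B - 1) × Bool),
          (((Equiv.Perm.sign σ : ℤ) : ℂ) * (1 / (Mr : ℂ)) ^ n) *
            ∫ x : Fin n → ℝ,
              Complex.exp (Complex.I * ((∑ i, phiFun ω (ε i) t * (x (σ i) - x i) : ℝ) : ℂ)) *
                (((sincProd Mr σ x : ℂ)) * ((f x : ℝ) : ℂ)) := by
    intro t
    have hpt : ∀ x : Fin n → ℝ,
        (((Matrix.of fun i j : Fin n =>
            sinc (Real.pi * (x i - x j) / Mr) *
              ((2 / Mr) *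
                (1 / 2 + ∑ l : Fin (B - 1), Real.cos (ω l t * (x i - x j))))).det * f x : ℝ) : ℂ)
        = ∑ σ : Equiv.Perm (Fin n), ∑ ε : Fin n → Option (Fin (B - 1) × Bool),
            (((Equiv.Perm.sign σ : ℤ) : ℂ) * (1 / (Mr : ℂ)) ^ n) *
              (Complex.exp (Complex.I * ((∑ i, phiFun ω (ε i) t * (x (σ i) - x i) : ℝ) : ℂ)) *
                (((sincProd Mr σ x : ℂ)) * ((f x : ℝ) : ℂ))) := by
      intro x
      have hdet : (((Matrix.of fun i j : Fin n =>
            sinc (Real.pi * (x i - x j) / Mr) *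
              ((2 / Mr) *
                (1 / 2 + ∑ l : Fin (B - 1), Real.cos (ω l t * (x i - x j))))).det : ℝ) : ℂ)
          = ((Matrix.of fun i j : Fin n =>
            sinc (Real.pi * (x i - x j) / Mr) *
              ((2 / Mr) *
                (1 / 2 + ∑ l : Fin (B - 1), Real.cos (ω l t * (x i - x j))))).map
                  Complex.ofRealHom).det := RingHom.map_det Complex.ofRealHom _
      rw [Complex.ofReal_mul, hdet, Matrix.det_apply, Finset.sum_mul]
      refine Finset.sum_congr rfl fun σ _ => ?_
      have hprod : (∏ i, ((Matrix.of fun i j : Fin n =>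
            sinc (Real.pi * (x i - x j) / Mr) *
              ((2 / Mr) *
                (1 / 2 + ∑ l : Fin (B - 1), Real.cos (ω l t * (x i - x j))))).map
                  Complex.ofRealHom) (σ i) i)
          = ∑ ε : Fin n → Option (Fin (B - 1) × Bool),
              Complex.exp (Complex.I * ((∑ i, phiFun ω (ε i) t * (x (σ i) - x i) : ℝ) : ℂ)) *
                (((sincProd Mr σ x : ℂ)) * (1 / (Mr : ℂ)) ^ n) := by
        calc (∏ i, ((Matrix.of fun i j : Fin n =>
            sinc (Real.pi * (x i - x j) / Mr) *
              ((2 / Mr) *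
                (1 / 2 + ∑ l : Fin (B - 1), Real.cos (ω l t * (x i - x j))))).map
                  Complex.ofRealHom) (σ i) i)
            = ∏ i, ∑ e : Option (Fin (B - 1) × Bool),
                Complex.exp (Complex.I * ((phiFun ω e t * (x (σ i) - x i) : ℝ) : ℂ)) *
                  (((sinc (Real.pi * (x (σ i) - x i) / Mr) : ℝ) : ℂ) * (1 / (Mr : ℂ))) := by
              refine Finset.prod_congr rfl fun i _ => ?_
              rw [Matrix.map_apply, Matrix.of_apply]
              exact entryExpand Mr hMr0 ω t _ _
          _ = ∑ ε : Fin n → Option (Fin (B - 1) × Bool), ∏ i,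
                Complex.exp (Complex.I * ((phiFun ω (ε i) t * (x (σ i) - x i) : ℝ) : ℂ)) *
                  (((sinc (Real.pi * (x (σ i) - x i) / Mr) : ℝ) : ℂ) * (1 / (Mr : ℂ))) :=
              Fintype.prod_sum _
          _ = ∑ ε : Fin n → Option (Fin (B - 1) × Bool),
              Complex.exp (Complex.I * ((∑ i, phiFun ω (ε i) t * (x (σ i) - x i) : ℝ) : ℂ)) *
                (((sincProd Mr σ x : ℂ)) * (1 / (Mr : ℂ)) ^ n) := by
              refine Finset.sum_congr rfl fun ε _ => ?_
              rw [Finset.prod_mul_distrib, Finset.prod_mul_distrib, Finset.prod_const,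
                ← Complex.ofReal_prod, ← Complex.exp_sum]
              have e1 : ∑ i, Complex.I * ((phiFun ω (ε i) t * (x (σ i) - x i) : ℝ) : ℂ)
                  = Complex.I * ((∑ i, phiFun ω (ε i) t * (x (σ i) - x i) : ℝ) : ℂ) := by
                push_cast
                rw [Finset.mul_sum]
              rw [e1]
              have e2 : (Finset.univ : Finset (Fin n)).card = n := by simp
              rw [e2]
              rfl
      rw [hprod, Units.smul_def, zsmul_eq_mul, Finset.mul_sum, Finset.sum_mul]
      refine Finset.sum_congr rfl fun ε _ => by ring
    calc ((∫ x : Fin n → ℝ, (Matrix.of fun i j : Fin n =>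
            sinc (Real.pi * (x i - x j) / Mr) *
              ((2 / Mr) *
                (1 / 2 + ∑ l : Fin (B - 1), Real.cos (ω l t * (x i - x j))))).det * f x : ℝ) : ℂ)
        = ∫ x : Fin n → ℝ, (((Matrix.of fun i j : Fin n =>
            sinc (Real.pi * (x i - x j) / Mr) *
              ((2 / Mr) *
                (1 / 2 + ∑ l : Fin (B - 1), Real.cos (ω l t * (x i - x j))))).det * f x : ℝ) : ℂ) :=
          (integral_ofReal).symm
      _ = ∫ x : Fin n → ℝ, ∑ σ : Equiv.Perm (Fin n), ∑ ε : Fin n → Option (Fin (B - 1) × Bool),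
            (((Equiv.Perm.sign σ : ℤ) : ℂ) * (1 / (Mr : ℂ)) ^ n) *
              (Complex.exp (Complex.I * ((∑ i, phiFun ω (ε i) t * (x (σ i) - x i) : ℝ) : ℂ)) *
                (((sincProd Mr σ x : ℂ)) * ((f x : ℝ) : ℂ))) := by
          congr 1
          funext x
          exact hpt x
      _ = ∑ σ : Equiv.Perm (Fin n), ∑ ε : Fin n → Option (Fin (B - 1) × Bool),
          (((Equiv.Perm.sign σ : ℤ) : ℂ) * (1 / (Mr : ℂ)) ^ n) *
            ∫ x : Fin n → ℝ,
              Complex.exp (Complex.I * ((∑ i, phiFun ω (ε i) t * (x (σ i) - x i) : ℝ) : ℂ)) *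
                (((sincProd Mr σ x : ℂ)) * ((f x : ℝ) : ℂ)) := by
          rw [integral_finset_sum _ fun σ _ => integrable_finset_sum _ fun ε _ =>
            ((hint2 σ _ (hΘmeas σ ε t)).const_mul _)]
          refine Finset.sum_congr rfl fun σ _ => ?_
          rw [integral_finset_sum _ fun ε _ => ((hint2 σ _ (hΘmeas σ ε t)).const_mul _)]
          refine Finset.sum_congr rfl fun ε _ => ?_
          rw [integral_const_mul]
  -- Step 2: limits of the individual terms
  have hlim : ∀ (σ : Equiv.Perm (Fin n)) (ε : Fin n → Option (Fin (B - 1) × Bool)),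
      Tendsto (fun t : ℕ =>
        (((Equiv.Perm.sign σ : ℤ) : ℂ) * (1 / (Mr : ℂ)) ^ n) *
          ∫ x : Fin n → ℝ,
            Complex.exp (Complex.I * ((∑ i, phiFun ω (ε i) t * (x (σ i) - x i) : ℝ) : ℂ)) *
              (((sincProd Mr σ x : ℂ)) * ((f x : ℝ) : ℂ))) atTop
        (nhds (if (∀ i, ε (σ i) = ε i)
          then (((Equiv.Perm.sign σ : ℤ) : ℂ) * (1 / (Mr : ℂ)) ^ n) * J σ else 0)) := by
    intro σ ε
    by_cases hcase : ∀ i, ε (σ i) = ε i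
    · rw [if_pos hcase]
      have hzero : ∀ (t : ℕ) (x : Fin n → ℝ),
          (∑ i, phiFun ω (ε i) t * (x (σ i) - x i)) = 0 := by
        intro t x
        rw [phase_eq]
        refine Finset.sum_eq_zero fun j _ => ?_
        have hj : ε (σ⁻¹ j) = ε j := by
          have := hcase (σ⁻¹ j)
          rw [Equiv.Perm.inv_def, Equiv.apply_symm_apply] at this
          exact this.symm
        rw [hj, sub_self, zero_mul]
      have hconst : ∀ t : ℕ,
          (∫ x : Fin n → ℝ,
            Complex.exp (Complex.I * ((∑ i, phiFun ω (ε i) t * (x (σ i) - x i) : ℝ) : ℂ)) *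
              (((sincProd Mr σ x : ℂ)) * ((f x : ℝ) : ℂ))) = J σ := by
        intro t
        rw [hJdef]
        congr 1
        funext x
        rw [hzero t x]
        simp
      simp only [hconst]
      exact tendsto_const_nhds
    · rw [if_neg hcase]
      push_neg at hcase
      obtain ⟨i0, hi0⟩ := hcase
      have h0 : (0 : ℂ) = (((Equiv.Perm.sign σ : ℤ) : ℂ) * (1 / (Mr : ℂ)) ^ n) * 0 := by ring
      rw [h0]
      refine Tendsto.const_mul _ ?_
      have hre : ∀ t : ℕ,
          (∫ x : Fin n → ℝ,
            Complex.exp (Complex.I * ((∑ i, phiFun ω (ε i) t * (x (σ i) - x i) : ℝ) : ℂ)) *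
              (((sincProd Mr σ x : ℂ)) * ((f x : ℝ) : ℂ)))
          = ∫ x : Fin n → ℝ,
              Complex.exp (Complex.I *
                ((∑ j, (phiFun ω (ε (σ⁻¹ j)) t - phiFun ω (ε j) t) * x j : ℝ) : ℂ)) *
                (((sincProd Mr σ x : ℂ)) * ((f x : ℝ) : ℂ)) := by
        intro t
        congr 1
        funext x
        rw [phase_eq]
      simp only [hre]
      refine rl_aux (fun x => ((sincProd Mr σ x : ℂ)) * ((f x : ℝ) : ℂ))
        (fun t j => phiFun ω (ε (σ⁻¹ j)) t - phiFun ω (ε j) t) (σ i0) ?_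
      have hne : ε i0 ≠ ε (σ i0) := fun h => hi0 h.symm
      have := phi_sep ω hω hsep (ε i0) (ε (σ i0)) hne
      refine this.congr' (Filter.Eventually.of_forall fun t => ?_)
      simp only [Equiv.Perm.inv_def, Equiv.symm_apply_apply]
  -- Step 3: the combined limit
  have hconv : Tendsto (fun t : ℕ =>
      ∑ σ : Equiv.Perm (Fin n), ∑ ε : Fin n → Option (Fin (B - 1) × Bool),
        (((Equiv.Perm.sign σ : ℤ) : ℂ) * (1 / (Mr : ℂ)) ^ n) *
          ∫ x : Fin n → ℝ,
            Complex.exp (Complex.I * ((∑ i, phiFun ω (ε i) t * (x (σ i) - x i) : ℝ) : ℂ)) *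
              (((sincProd Mr σ x : ℂ)) * ((f x : ℝ) : ℂ))) atTop
      (nhds (∑ σ : Equiv.Perm (Fin n), ∑ ε : Fin n → Option (Fin (B - 1) × Bool),
        if (∀ i, ε (σ i) = ε i)
          then (((Equiv.Perm.sign σ : ℤ) : ℂ) * (1 / (Mr : ℂ)) ^ n) * J σ else 0)) :=
    tendsto_finset_sum _ fun σ _ => tendsto_finset_sum _ fun ε _ => hlim σ ε
  -- Step 4: identify the limit with the right-hand side
  have hL : ((∫ x : Fin n → ℝ,
        adet (-(1 / Mr)) (Matrix.of fun i j : Fin n => sinc (Real.pi * (x i - x j) / Mr))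
          * f x : ℝ) : ℂ)
      = ∑ σ : Equiv.Perm (Fin n), (((-(1 / Mr) : ℝ) ^ (n - cycleCount σ) : ℝ) : ℂ) * J σ := by
    have hpt2 : ∀ x : Fin n → ℝ,
        ((adet (-(1 / Mr)) (Matrix.of fun i j : Fin n => sinc (Real.pi * (x i - x j) / Mr))
          * f x : ℝ) : ℂ)
        = ∑ σ : Equiv.Perm (Fin n), (((-(1 / Mr) : ℝ) ^ (n - cycleCount σ) : ℝ) : ℂ) *
            (((sincProd Mr σ x : ℂ)) * ((f x : ℝ) : ℂ)) := by
      intro x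
      rw [adet, Complex.ofReal_mul, Complex.ofReal_sum, Finset.sum_mul]
      refine Finset.sum_congr rfl fun σ _ => ?_
      rw [Complex.ofReal_mul, Complex.ofReal_prod]
      have : ∏ i, ((Matrix.of fun i j : Fin n => sinc (Real.pi * (x i - x j) / Mr)) (σ i) i : ℂ)
          = ((sincProd Mr σ x : ℂ)) := by
        rw [← Complex.ofReal_prod]
        rfl
      rw [this]
      ring
    calc ((∫ x : Fin n → ℝ, adet (-(1 / Mr))
            (Matrix.of fun i j : Fin n => sinc (Real.pi * (x i - x j) / Mr)) * f x : ℝ) : ℂ)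
        = ∫ x : Fin n → ℝ, ((adet (-(1 / Mr))
            (Matrix.of fun i j : Fin n => sinc (Real.pi * (x i - x j) / Mr)) * f x : ℝ) : ℂ) :=
          (integral_ofReal).symm
      _ = ∫ x : Fin n → ℝ, ∑ σ : Equiv.Perm (Fin n),
            (((-(1 / Mr) : ℝ) ^ (n - cycleCount σ) : ℝ) : ℂ) *
              (((sincProd Mr σ x : ℂ)) * ((f x : ℝ) : ℂ)) := by
          congr 1
          funext x
          exact hpt2 x
      _ = ∑ σ : Equiv.Perm (Fin n), (((-(1 / Mr) : ℝ) ^ (n - cycleCount σ) : ℝ) : ℂ) * J σ := by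
          rw [integral_finset_sum _ fun σ _ => ((hJint σ).const_mul _)]
          refine Finset.sum_congr rfl fun σ _ => ?_
          rw [integral_const_mul, hJdef]
  have hmatch : ∀ σ : Equiv.Perm (Fin n),
      (((-(1 / Mr) : ℝ) ^ (n - cycleCount σ) : ℝ) : ℂ) * J σ
      = ∑ ε : Fin n → Option (Fin (B - 1) × Bool),
          if (∀ i, ε (σ i) = ε i)
            then (((Equiv.Perm.sign σ : ℤ) : ℂ) * (1 / (Mr : ℂ)) ^ n) * J σ else 0 := by
    intro σ
    rw [← Finset.sum_filter, Finset.sum_const, card_eps, nsmul_eq_mul]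
    have hcard : ((Fintype.card (Option (Fin (B - 1) × Bool)) : ℕ) : ℂ) = (Mr : ℂ) := by
      rw [Fintype.card_option, Fintype.card_prod, Fintype.card_fin, Fintype.card_bool]
      rw [hMrdef]
      push_cast [Nat.cast_sub hB]
      ring
    rw [Nat.cast_pow, hcard]
    have hmn := cycleCount_le σ
    have hpow : (Mr : ℂ) ^ (cycleCount σ) * (1 / (Mr : ℂ)) ^ n
        = (1 / (Mr : ℂ)) ^ (n - cycleCount σ) := by
      have h1 : (Mr : ℂ) ^ n = (Mr : ℂ) ^ (n - cycleCount σ) * (Mr : ℂ) ^ (cycleCount σ) := by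
        rw [← pow_add]
        congr 1
        omega
      simp only [one_div, inv_pow]
      rw [h1, mul_inv, mul_comm ((Mr : ℂ) ^ (n - cycleCount σ))⁻¹ _, ← mul_assoc,
        mul_inv_cancel₀ (pow_ne_zero _ hMc0), one_mul]
    have hsc : (((-(1 / Mr)) ^ (n - cycleCount σ) : ℝ) : ℂ)
        = (Mr : ℂ) ^ (cycleCount σ) * (((Equiv.Perm.sign σ : ℤ) : ℂ) * (1 / (Mr : ℂ)) ^ n) := by
      rw [Complex.ofReal_pow, sign_eq_pow σ]
      push_cast
      rw [neg_pow, ← hpow]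
      ring
    rw [hsc]
    ring
  -- Step 5: conclusion
  have hRHS : ((∫ x : Fin n → ℝ,
        adet (-(1 / Mr)) (Matrix.of fun i j : Fin n => sinc (Real.pi * (x i - x j) / Mr))
          * f x : ℝ) : ℂ)
      = ∑ σ : Equiv.Perm (Fin n), ∑ ε : Fin n → Option (Fin (B - 1) × Bool),
          if (∀ i, ε (σ i) = ε i)
            then (((Equiv.Perm.sign σ : ℤ) : ℂ) * (1 / (Mr : ℂ)) ^ n) * J σ else 0 :=
    hL.trans (Finset.sum_congr rfl fun σ _ => hmatch σ)
  refine (Complex.isometry_ofReal.isEmbedding.tendsto_nhds_iff).mpr ?_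
  simp only [Function.comp_def]
  simp only [expand]
  rw [hRHS]
  exact hconv
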